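/- Given an LP pseudocodeword (h, z) of C with parameter M = Σ_{b∈C_j} z_{j,b}, there exists an M-cover of the Tanner graph of H together with a labelling of the variable-vertex copies by ring elements satisfying all lifted parity checks, such that for every i and every α ∈ R, the number of copies of variable vertex u_i labelled α equals h_i^{(α)} (where h_i^{(0)} = M − Σ_{α∈R⁻} h_i^{(α)}). -/

import Mathlib

lemma exists_perm_comp {M : ℕ} {D : Type} [DecidableEq D] (f g : Fin M → D)
    (hfib : ∀ α : D, (Finset.univ.filter (fun l => f l = α)).card
                   = (Finset.univ.filter (fun l => g l = α)).card) :
    ∃ e : Equiv.Perm (Fin M), ∀ l, g (e l) = f l := by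
  classical
  have hc : ∀ α, Fintype.card {l // f l = α} = Fintype.card {l // g l = α} := by
    intro α
    rw [Fintype.card_subtype, Fintype.card_subtype]
    exact hfib α
  refine ⟨(Equiv.sigmaFiberEquiv f).symm.trans
    ((Equiv.sigmaCongrRight (fun α => Fintype.equivOfCardEq (hc α))).trans
      (Equiv.sigmaFiberEquiv g)), fun l => ?_⟩
  simp [Equiv.sigmaFiberEquiv, Equiv.sigmaCongrRight]
  exact (Fintype.equivOfCardEq (hc (f l)) ⟨l, rfl⟩).2

lemma exists_fn_with_counts {M : ℕ} {D : Type} [DecidableEq D]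
    (s : Finset D) (c : D → ℕ) (hM : ∑ b ∈ s, c b = M) :
    ∃ β : Fin M → D, (∀ l, β l ∈ s) ∧
      ∀ b ∈ s, (Finset.univ.filter (fun l => β l = b)).card = c b := by
  classical
  have hcard : Fintype.card (Σ b : s, Fin (c b.1)) = M := by
    simp only [Fintype.card_sigma, Fintype.card_fin]
    rw [← hM, ← Finset.sum_attach s (fun b => c b)]
    rfl
  let e : Fin M ≃ Σ b : s, Fin (c b.1) := (Fintype.equivFinOfCardEq hcard).symm
  refine ⟨fun l => ((e l).1 : D), fun l => (e l).1.2, fun b hb => ?_⟩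
  have h1 : (Finset.univ.filter (fun l => ((e l).1 : D) = b)).card
      = (Finset.univ.filter (fun x : Σ b' : s, Fin (c b'.1) => (x.1 : D) = b)).card := by
    apply Finset.card_bij' (fun l _ => e l) (fun x _ => e.symm x) <;> simp
  rw [h1]
  have h2 : (Finset.univ.filter (fun x : Σ b' : s, Fin (c b'.1) => (x.1 : D) = b))
      = ({⟨b, hb⟩} : Finset s).sigma (fun b' => Finset.univ) := by
    ext x
    simp [Finset.mem_sigma, Subtype.ext_iff]
  rw [h2, Finset.card_sigma]
  simp


/-- The single parity-check code `C_j` of row `j` of `H`, represented as full-length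
vectors supported on `I_j = supp(H_j)` and satisfying the `j`-th parity check. -/
def localCode {m n : ℕ} {R : Type} [CommRing R] [Fintype R] [DecidableEq R]
    (H : Matrix (Fin m) (Fin n) R) (j : Fin m) : Finset (Fin n → R) :=
  Finset.univ.filter (fun b => (∀ i, H j i = 0 → b i = 0) ∧ (∑ i, b i * H j i) = 0)
/-- `(h, z)` is an LP pseudocodeword with scaling parameter `M`: the `z_{j,b}` are
nonnegative integers summing to `M` on each local code `C_j`, and `h` is the induced
(integer) marginal at every supported coordinate. -/
def isLPpcw {m n : ℕ} {R : Type} [CommRing R] [Fintype R] [DecidableEq R]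
    (H : Matrix (Fin m) (Fin n) R) (M : ℕ)
    (h : Fin n → {α : R // α ≠ 0} → ℕ) (z : Fin m → (Fin n → R) → ℕ) : Prop :=
  (∀ j, ∑ b ∈ localCode H j, z j b = M) ∧
  (∀ j i (α : {α : R // α ≠ 0}), H j i ≠ 0 →
    h i α = ∑ b ∈ (localCode H j).filter (fun b => b i = α.val), z j b)

/-- every LP pseudocodeword `(h,z)` with parameter `M` is realized by a
graph-cover pseudocodeword: there is an `M`-cover of the Tanner graph (encoded by the
edge permutations `π j i : Fin M ≃ Fin M`) and a labelling `p` of the variable-vertex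
copies satisfying every lifted parity check, such that for each `i` the number of copies
of `u_i` labelled `α` is `h_i^{(α)}` for `α ≠ 0`, and the copies labelled `0` together
with `Σ_{α∈R⁻} h_i^{(α)}` count up to `M` (i.e. the count is `h_i^{(0)} = M − Σ_α h_i^{(α)}`). -/
theorem lp_pcw_to_graph_cover_pcw {m n : ℕ} {R : Type}
    [CommRing R] [Fintype R] [DecidableEq R]
    (H : Matrix (Fin m) (Fin n) R)
    (hcols : ∀ i, ∃ j, H j i ≠ 0)
    (M : ℕ)
    (h : Fin n → {α : R // α ≠ 0} → ℕ) (z : Fin m → (Fin n → R) → ℕ)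
    (hp : isLPpcw H M h z) :
    ∃ (π : Fin m → Fin n → Equiv.Perm (Fin M)) (p : Fin n → Fin M → R),
      (∀ j l, ∑ i, p i (π j i l) * H j i = 0) ∧
      (∀ i (α : {α : R // α ≠ 0}),
        (Finset.univ.filter (fun l : Fin M => p i l = α.val)).card = h i α) ∧
      (∀ i, (Finset.univ.filter (fun l : Fin M => p i l = 0)).card +
        ∑ α : {α : R // α ≠ 0}, h i α = M) := by
  classical
  obtain ⟨hz, hmarg⟩ := hp
  set T : Fin n → ℕ := fun i => ∑ α : {α : R // α ≠ 0}, h i α with hT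
  set c : Fin n → R → ℕ := fun i α => if hα : α = 0 then M - T i else h i ⟨α, hα⟩ with hc
  -- the split identity for any row supporting column i
  have hsplit : ∀ (j : Fin m) (i : Fin n), H j i ≠ 0 →
      ∑ b ∈ (localCode H j).filter (fun b => b i = 0), z j b + T i = M := by
    intro j i hji
    have hTj : T i = ∑ b ∈ (localCode H j).filter (fun b => ¬ b i = 0), z j b := by
      have hmaps : ∀ b ∈ (localCode H j).filter (fun b => ¬ b i = 0),
          b i ∈ Finset.univ.filter (fun α : R => α ≠ 0) := by
        intro b hb
        simp only [Finset.mem_filter, Finset.mem_univ, true_and] at hb ⊢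
        exact hb.2
      rw [← Finset.sum_fiberwise_of_maps_to hmaps (fun b => z j b)]
      have h1 : T i = ∑ α ∈ Finset.univ.filter (fun α : R => α ≠ 0),
          ∑ b ∈ (localCode H j).filter (fun b => b i = α), z j b := by
        rw [hT]
        rw [Finset.sum_subtype (p := fun α : R => α ≠ 0)
          (Finset.univ.filter (fun α : R => α ≠ 0))
          (by intro x; simp) (fun α : R => ∑ b ∈ (localCode H j).filter (fun b => b i = α), z j b)]
        exact Finset.sum_congr rfl (fun α _ => hmarg j i α hji)
      rw [h1]
      refine Finset.sum_congr rfl (fun α hα => ?_)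
      simp only [Finset.mem_filter, Finset.mem_univ, true_and] at hα
      refine Finset.sum_congr ?_ (fun _ _ => rfl)
      rw [Finset.filter_filter]
      refine Finset.filter_congr (fun b _ => ?_)
      constructor
      · intro hb; exact ⟨hb ▸ hα, hb⟩
      · intro hb; exact hb.2
    rw [hTj, ← hz j]
    exact Finset.sum_filter_add_sum_filter_not _ _ _
  have hTle : ∀ i, T i ≤ M := by
    intro i
    obtain ⟨j, hji⟩ := hcols i
    exact Nat.le.intro (by rw [Nat.add_comm]; exact hsplit j i hji)
  -- key fiber computation
  have key : ∀ (j : Fin m) (i : Fin n), H j i ≠ 0 → ∀ α : R,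
      ∑ b ∈ (localCode H j).filter (fun b => b i = α), z j b = c i α := by
    intro j i hji α
    by_cases hα : α = 0
    · subst hα
      simp only [hc, dif_pos]
      exact Nat.eq_sub_of_add_eq (hsplit j i hji)
    · simp only [hc, dif_neg hα]
      exact (hmarg j i ⟨α, hα⟩ hji).symm
  -- construct the labels p i with prescribed counts
  have hsumc : ∀ i, ∑ α : R, c i α = M := by
    intro i
    rw [← Finset.add_sum_erase Finset.univ (c i) (Finset.mem_univ (0 : R))]
    have h2 : ∑ α ∈ Finset.univ.erase (0 : R), c i α = T i := by
      rw [Finset.sum_subtype (p := fun α : R => α ≠ 0)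
        (Finset.univ.erase (0 : R)) (by intro x; simp) (c i)]
      rw [hT]
      refine Finset.sum_congr rfl (fun α _ => ?_)
      simp only [hc, dif_neg α.2]
    rw [h2]
    simp only [hc, dif_pos]
    exact Nat.sub_add_cancel (hTle i)
  have hpex : ∀ i, ∃ pf : Fin M → R, (∀ l, pf l ∈ (Finset.univ : Finset R)) ∧
      ∀ α ∈ (Finset.univ : Finset R),
        (Finset.univ.filter (fun l => pf l = α)).card = c i α := by
    intro i
    exact exists_fn_with_counts (Finset.univ : Finset R) (c i) (hsumc i)
  choose p hpmem hpcount using hpex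
  -- construct the local codeword assignments β j
  have hβex : ∀ j, ∃ βf : Fin M → (Fin n → R), (∀ l, βf l ∈ localCode H j) ∧
      ∀ b ∈ localCode H j,
        (Finset.univ.filter (fun l => βf l = b)).card = z j b := by
    intro j
    exact exists_fn_with_counts (localCode H j) (z j) (hz j)
  choose β hβmem hβcount using hβex
  -- fibers of (β j · i) match fibers of p i whenever H j i ≠ 0
  have hfib : ∀ (j : Fin m) (i : Fin n), H j i ≠ 0 → ∀ α : R,
      (Finset.univ.filter (fun l => β j l i = α)).card
        = (Finset.univ.filter (fun l => p i l = α)).card := by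
    intro j i hji α
    rw [hpcount i α (Finset.mem_univ α), ← key j i hji α]
    rw [Finset.card_eq_sum_card_fiberwise
      (f := β j) (t := (localCode H j).filter (fun b => b i = α))
      (by intro l hl
          simp only [Finset.mem_coe, Finset.mem_filter, Finset.mem_univ, true_and] at hl ⊢
          exact ⟨hβmem j l, hl⟩)]
    refine Finset.sum_congr rfl (fun b hb => ?_)
    simp only [Finset.mem_filter] at hb
    rw [← hβcount j b hb.1, Finset.filter_filter]
    congr 1
    refine Finset.filter_congr (fun l _ => ?_)
    constructor
    · rintro ⟨_, hbl⟩; exact hbl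
    · rintro hbl; exact ⟨hbl ▸ hb.2, hbl⟩
  -- build the permutations
  have hperm : ∀ (j : Fin m) (i : Fin n), ∃ e : Equiv.Perm (Fin M),
      H j i ≠ 0 → ∀ l, p i (e l) = β j l i := by
    intro j i
    by_cases hji : H j i ≠ 0
    · obtain ⟨e, he⟩ := exists_perm_comp (fun l => β j l i) (p i) (hfib j i hji)
      exact ⟨e, fun _ => he⟩
    · exact ⟨1, fun hji' => absurd hji' hji⟩
  choose π hπ using hperm
  refine ⟨π, p, ?_, ?_, ?_⟩
  · intro j l
    have hloc := hβmem j l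
    simp only [localCode, Finset.mem_filter, Finset.mem_univ, true_and] at hloc
    calc ∑ i, p i (π j i l) * H j i = ∑ i, β j l i * H j i := by
          refine Finset.sum_congr rfl (fun i _ => ?_)
          by_cases hji : H j i = 0
          · rw [hji, mul_zero, mul_zero]
          · rw [hπ j i hji l]
      _ = 0 := hloc.2
  · intro i α
    obtain ⟨j, hji⟩ := hcols i
    rw [hpcount i α.val (Finset.mem_univ _)]
    simp only [hc, dif_neg α.2]
  · intro i
    rw [hpcount i 0 (Finset.mem_univ _)]
    simp only [hc, dif_pos]
    exact Nat.sub_add_cancel (hTle i)
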